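/- Let B be a d×d integer matrix which is expansive (every eigenvalue λ ∈ ℂ of B satisfies |λ| > 1), and let D ⊆ ℤ^d be a complete set of representatives of ℤ^d/Bℤ^d. Then every sequence x : ℕ → ℤ^d with x_k − B x_{k+1} ∈ D for all k ∈ ℕ is eventually periodic: there exist N ∈ ℕ and q ≥ 1 such that x_{k+q} = x_k for all k ≥ N. Consequently the associated digit string (x_k − B x_{k+1})_{k∈ℕ} ends in an infinitely repeated finite word. -/

import Mathlib

open Matrix
open Polynomial Filter
open scoped ENNReal NNReal

attribute [local instance] Matrix.linftyOpNormedRing Matrix.linftyOpNormedAlgebra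

private lemma aux_eval_charpoly {d : ℕ} (M : Matrix (Fin d) (Fin d) ℂ) (r : ℂ) :
    M.charpoly.eval r = (scalar (Fin d) r - M).det := by
  rw [Matrix.charpoly, eval_det, matPolyEquiv_charmatrix]
  simp

private lemma aux_isRoot_of_mem_spectrum {d : ℕ} (M : Matrix (Fin d) (Fin d) ℂ) (μ : ℂ)
    (h : μ ∈ spectrum ℂ M) : M.charpoly.IsRoot μ := by
  rw [spectrum.mem_iff] at h
  rw [Polynomial.IsRoot, aux_eval_charpoly]
  by_contra hdet
  exact h ((Matrix.isUnit_iff_isUnit_det _).mpr (isUnit_iff_ne_zero.mpr hdet))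

private lemma aux_inv_spectrum {d : ℕ} (M : Matrix (Fin d) (Fin d) ℂ) (hM : IsUnit M.det)
    (z : ℂ) (hz : z ∈ spectrum ℂ M⁻¹) : z ≠ 0 ∧ z⁻¹ ∈ spectrum ℂ M := by
  obtain ⟨u, hu⟩ := (Matrix.isUnit_iff_isUnit_det _).mpr hM
  have hz0 : z ≠ 0 := by
    rintro rfl
    exact (spectrum.zero_mem_iff ℂ).mp hz (Matrix.isUnit_nonsing_inv_iff.mpr ⟨u, hu⟩)
  refine ⟨hz0, ?_⟩
  have hcoe : ((u⁻¹ : (Matrix (Fin d) (Fin d) ℂ)ˣ) : Matrix (Fin d) (Fin d) ℂ) = M⁻¹ := by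
    rw [Matrix.coe_units_inv, hu]
  have := (spectrum.inv_mem_iff (r := Units.mk0 z hz0) (a := u⁻¹)).mp (by rwa [hcoe])
  rw [inv_inv, hu] at this
  simpa using this

private lemma aux_pow_norm_bound {d : ℕ} (hd : 0 < d) (A : Matrix (Fin d) (Fin d) ℂ)
    (hρ : spectralRadius ℂ A < 1) :
    ∃ r C : ℝ, 0 < r ∧ r < 1 ∧ 0 < C ∧ ∀ n : ℕ, ‖A ^ n‖ ≤ C * r ^ n := by
  have : Nonempty (Fin d) := ⟨⟨0, hd⟩⟩
  obtain ⟨r, hρr, hr1⟩ := ENNReal.lt_iff_exists_nnreal_btwn.mp hρ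
  have hr1' : (r : ℝ) < 1 := by exact_mod_cast hr1
  have hr0 : (0:ℝ) < (r:ℝ) ⊔ (1/2 : ℝ) := lt_sup_iff.mpr (Or.inr one_half_pos)
  set s : ℝ := ((r:ℝ) ⊔ (1/2 : ℝ)) with hs
  have hs1 : s < 1 := sup_lt_iff.mpr ⟨hr1', by norm_num⟩
  have hT := spectrum.pow_norm_pow_one_div_tendsto_nhds_spectralRadius A
  have hev : ∀ᶠ n : ℕ in atTop, ENNReal.ofReal (‖A ^ n‖ ^ (1 / n : ℝ)) < (r : ℝ≥0∞) :=
    hT.eventually_lt_const hρr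
  have hev2 : ∀ᶠ n : ℕ in atTop, ‖A ^ n‖ ≤ s ^ n := by
    filter_upwards [hev, eventually_ge_atTop 1] with n hn hn1
    have hlt : ‖A ^ n‖ ^ (1 / n : ℝ) < (r : ℝ) := by
      have := (ENNReal.ofReal_lt_iff_lt_toReal (by positivity) ENNReal.coe_ne_top).mp hn
      simpa using this
    have hnn : (0:ℝ) < n := by exact_mod_cast hn1
    calc ‖A ^ n‖ = (‖A ^ n‖ ^ (1 / n : ℝ)) ^ (n : ℕ) := by
          rw [← Real.rpow_natCast (‖A ^ n‖ ^ (1 / n : ℝ)) n, ← Real.rpow_mul (norm_nonneg _)]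
          rw [one_div, inv_mul_cancel₀ (ne_of_gt hnn), Real.rpow_one]
      _ ≤ (r : ℝ) ^ n := pow_le_pow_left₀ (Real.rpow_nonneg (norm_nonneg _) _) hlt.le n
      _ ≤ s ^ n := pow_le_pow_left₀ r.2 le_sup_left n
  obtain ⟨N, hN⟩ := hev2.exists_forall_of_atTop
  set C : ℝ := 1 + ∑ n ∈ Finset.range N, ‖A ^ n‖ / s ^ n with hC
  have hC1 : (1:ℝ) ≤ C := by
    have : (0:ℝ) ≤ ∑ n ∈ Finset.range N, ‖A ^ n‖ / s ^ n :=
      Finset.sum_nonneg fun i _ => div_nonneg (norm_nonneg _) (by positivity)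
    rw [hC]
    exact le_add_of_nonneg_right this
  refine ⟨s, C, hr0, hs1, lt_of_lt_of_le one_pos hC1, fun n => ?_⟩
  rcases le_or_gt N n with h | h
  · calc ‖A ^ n‖ ≤ s ^ n := hN n h
      _ ≤ C * s ^ n := le_mul_of_one_le_left (by positivity) hC1
  · have hmem : ‖A ^ n‖ / s ^ n ≤ ∑ m ∈ Finset.range N, ‖A ^ m‖ / s ^ m :=
      Finset.single_le_sum (f := fun m => ‖A ^ m‖ / s ^ m)
        (fun i _ => div_nonneg (norm_nonneg _) (by positivity)) (Finset.mem_range.mpr h)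
    have hle : ‖A ^ n‖ / s ^ n ≤ C := by rw [hC]; linarith
    calc ‖A ^ n‖ = (‖A ^ n‖ / s ^ n) * s ^ n := by field_simp
      _ ≤ C * s ^ n := mul_le_mul_of_nonneg_right hle (by positivity)

set_option maxHeartbeats 1000000

/-- A square integer matrix is expansive if all of its complex eigenvalues `μ`
satisfy `|μ| > 1`. -/
def Expansive {d : ℕ} (B : Matrix (Fin d) (Fin d) ℤ) : Prop :=
  ∀ μ : ℂ, (Matrix.charpoly (B.map (Int.cast : ℤ → ℂ))).IsRoot μ → 1 < ‖μ‖

/-- for an expansive integer matrix B and a complete digit set D,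
every sequence of integer points x with x_k − B x_{k+1} ∈ D is eventually
periodic, and consequently its digit string ends in an infinitely repeated
finite word. -/
theorem statement7 (d : ℕ) (hd : 0 < d) (B : Matrix (Fin d) (Fin d) ℤ)
    (hB : Expansive B) (D : Set (Fin d → ℤ))
    (hD : ∀ x : Fin d → ℤ, ∃! v : Fin d → ℤ, v ∈ D ∧ ∃ y : Fin d → ℤ, x - v = B.mulVec y)
    (x : ℕ → Fin d → ℤ) (hx : ∀ k, x k - B.mulVec (x (k + 1)) ∈ D) :
    ∃ N q : ℕ, 1 ≤ q ∧ (∀ k, N ≤ k → x (k + q) = x k) ∧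
      (∀ k, N ≤ k →
        x (k + q) - B.mulVec (x (k + q + 1)) = x k - B.mulVec (x (k + 1))) := by
  have hBe : ∀ μ : ℂ, (Matrix.charpoly (B.map (Int.cast : ℤ → ℂ))).IsRoot μ → 1 < ‖μ‖ := hB

  have hne : Nonempty (Fin d) := ⟨⟨0, hd⟩⟩
  set Bc : Matrix (Fin d) (Fin d) ℂ := B.map (Int.cast : ℤ → ℂ) with hBc
  have hdetEq : Bc.det = (B.det : ℂ) := by
    rw [hBc]
    exact (RingHom.map_det (Int.castRingHom ℂ) B).symm
  -- determinant nonzero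
  have hdetc : Bc.det ≠ 0 := by
    intro h0
    have hroot : Bc.charpoly.IsRoot 0 := by
      rw [Polynomial.IsRoot, aux_eval_charpoly]
      rw [map_zero]
      rw [show (0 : Matrix (Fin d) (Fin d) ℂ) - Bc = (-1 : ℂ) • Bc by simp]
      rw [det_smul, h0, mul_zero]
    have := hBe 0 hroot
    rw [norm_zero] at this
    exact absurd this (by norm_num)
  have hdet0 : B.det ≠ 0 := fun h => hdetc (by rw [hdetEq, h]; simp)
  have hdetU : IsUnit Bc.det := isUnit_iff_ne_zero.mpr hdetc
  set A : Matrix (Fin d) (Fin d) ℂ := Bc⁻¹ with hA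
  -- spectral radius of A is < 1
  have hρ : spectralRadius ℂ A < 1 := by
    have h1 : ∀ z ∈ spectrum ℂ A, ‖z‖₊ < 1 := by
      intro z hz
      obtain ⟨hz0, hmem⟩ := aux_inv_spectrum Bc hdetU z hz
      have hgt := hBe z⁻¹ (aux_isRoot_of_mem_spectrum Bc z⁻¹ hmem)
      rw [norm_inv] at hgt
      have habs : ‖z‖ < 1 := by
        have h0 : 0 < ‖z‖ := by simpa using hz0
        rw [one_lt_inv_iff₀] at hgt
        exact hgt.2
      have : ‖z‖ < 1 := habs
      exact_mod_cast this
    simpa using spectrum.spectralRadius_lt_of_forall_lt A h1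
  obtain ⟨r, C, hr0, hr1, hC0, hpow⟩ := aux_pow_norm_bound hd A hρ
  -- cast to ℂ vectors
  set cv : (Fin d → ℤ) → (Fin d → ℂ) := fun v i => ((v i : ℤ) : ℂ) with hcv
  have cv_mulVec : ∀ (M : Matrix (Fin d) (Fin d) ℤ) (y : Fin d → ℤ),
      cv (M.mulVec y) = (M.map (Int.cast : ℤ → ℂ)).mulVec (cv y) := by
    intro M y
    funext i
    simp [hcv, Matrix.mulVec, dotProduct, Matrix.map_apply]
  have cv_sub : ∀ a b : Fin d → ℤ, cv (a - b) = cv a - cv b := by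
    intro a b; funext i; simp [hcv]
  -- digits
  set dig : ℕ → (Fin d → ℤ) := fun k => x k - B.mulVec (x (k + 1)) with hdig
  have hdig_spec : ∀ k, dig k ∈ D ∧ ∃ y, x k - dig k = B.mulVec y := by
    intro k
    exact ⟨hx k, x (k + 1), by rw [hdig]; ring⟩
  -- multiples of det are in the image of B
  have hdet_smul : ∀ w : Fin d → ℤ, ∃ y, B.det • w = B.mulVec y := by
    intro w
    refine ⟨(B.adjugate).mulVec w, ?_⟩
    rw [Matrix.mulVec_mulVec, Matrix.mul_adjugate, Matrix.smul_mulVec, Matrix.one_mulVec]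
  -- congruent points have the same digit data
  have hcong : ∀ v v' : Fin d → ℤ, (∃ y, v - v' = B.mulVec y) →
      ∀ w, (w ∈ D ∧ ∃ y, v - w = B.mulVec y) → (w ∈ D ∧ ∃ y, v' - w = B.mulVec y) := by
    rintro v v' ⟨y, hy⟩ w ⟨hwD, z, hz⟩
    refine ⟨hwD, z - y, ?_⟩
    rw [Matrix.mulVec_sub, ← hz, ← hy]
    ring
  -- reduction mod |det B|
  set m0 : ℤ := ((B.det).natAbs : ℤ) with hm0
  have hm0pos : 0 < m0 := by
    rw [hm0]
    exact_mod_cast Int.natAbs_pos.mpr hdet0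
  set red : (Fin d → ℤ) → (Fin d → ℤ) := fun v i => v i % m0 with hred
  have hred_cong : ∀ v : Fin d → ℤ, ∃ y, v - red v = B.mulVec y := by
    intro v
    obtain ⟨y, hy⟩ := hdet_smul fun i => (Int.sign B.det) * (v i / m0)
    refine ⟨y, ?_⟩
    rw [← hy]
    funext i
    simp only [Pi.sub_apply, Pi.smul_apply, smul_eq_mul, hred]
    have h2 := Int.emod_add_mul_ediv (v i) m0
    have h3 : B.det * Int.sign B.det = m0 := by
      rw [hm0]; exact_mod_cast Int.mul_sign_self B.det
    rw [← mul_assoc, h3]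
    omega
  -- the digit of a point equals the chosen digit of its reduction
  have hdig_red : ∀ k, dig k = (hD (red (x k))).choose := by
    intro k
    have h1 : dig k ∈ D ∧ ∃ y, red (x k) - dig k = B.mulVec y := by
      obtain ⟨y, hy⟩ := hred_cong (x k)
      have := hcong (x k) (red (x k)) ⟨y, hy⟩ (dig k) (hdig_spec k)
      exact this
    exact ((hD (red (x k))).unique h1 (hD (red (x k))).choose_spec.1)
  -- finite set of possible reductions
  set F0 : Finset (Fin d → ℤ) := Fintype.piFinset (fun _ : Fin d => Finset.Ico (0:ℤ) m0)
    with hF0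
  have hF0ne : F0.Nonempty := by
    rw [hF0]
    apply Fintype.piFinset_nonempty.mpr
    intro i
    exact Finset.nonempty_Ico.mpr hm0pos
  have hredF0 : ∀ v, red v ∈ F0 := by
    intro v
    rw [hF0]
    apply Fintype.mem_piFinset.mpr
    intro i
    rw [Finset.mem_Ico]
    exact ⟨Int.emod_nonneg _ (ne_of_gt hm0pos), Int.emod_lt_of_pos _ hm0pos⟩
  set Cd : ℝ := F0.sup' hF0ne (fun w => ‖cv ((hD w).choose)‖) with hCd
  have hdigCd : ∀ k, ‖cv (dig k)‖ ≤ Cd := by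
    intro k
    rw [hdig_red k, hCd]
    exact Finset.le_sup' (f := fun w => ‖cv ((hD w).choose)‖) (hredF0 (x k))
  have hCd0 : 0 ≤ Cd := le_trans (norm_nonneg _) (hdigCd 0)
  -- the recurrence over ℂ
  have hAB : A * Bc = 1 := Matrix.nonsing_inv_mul Bc hdetU
  have hrec : ∀ k, cv (x (k + 1)) = A.mulVec (cv (x k) - cv (dig k)) := by
    intro k
    have h1 : cv (x k) - cv (dig k) = Bc.mulVec (cv (x (k + 1))) := by
      rw [← cv_sub]
      have : x k - dig k = B.mulVec (x (k + 1)) := by rw [hdig]; ring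
      rw [this, cv_mulVec]
    rw [h1, Matrix.mulVec_mulVec, hAB, Matrix.one_mulVec]
  -- closed form
  have hcf : ∀ n, cv (x n) = (A ^ n).mulVec (cv (x 0))
      - ∑ i ∈ Finset.range n, (A ^ (n - i)).mulVec (cv (dig i)) := by
    intro n
    induction n with
    | zero => simp
    | succ n ih =>
      rw [hrec n, Matrix.mulVec_sub, ih]
      rw [Finset.sum_range_succ]
      have e1 : A.mulVec ((A ^ n).mulVec (cv (x 0))) = (A ^ (n+1)).mulVec (cv (x 0)) := by
        rw [Matrix.mulVec_mulVec, ← pow_succ']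
      have e2 : A.mulVec (∑ i ∈ Finset.range n, (A ^ (n - i)).mulVec (cv (dig i)))
          = ∑ i ∈ Finset.range n, (A ^ (n + 1 - i)).mulVec (cv (dig i)) := by
        rw [show A.mulVec = (Matrix.mulVecLin A : (Fin d → ℂ) →ₗ[ℂ] (Fin d → ℂ)) from rfl]
        rw [map_sum]
        apply Finset.sum_congr rfl
        intro i hi
        rw [Finset.mem_range] at hi
        simp only [Matrix.mulVecLin_apply]
        rw [Matrix.mulVec_mulVec, ← pow_succ']
        have hexp : n - i + 1 = n + 1 - i := by omega
        rw [hexp]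
      rw [Matrix.mulVec_sub, e1, e2]
      have e3 : (A ^ (n + 1 - n)).mulVec (cv (dig n)) = A.mulVec (cv (dig n)) := by
        norm_num
      rw [e3]
      abel
  -- geometric sum bound
  have hgeom : ∀ n : ℕ, ∑ i ∈ Finset.range n, r ^ i ≤ (1 - r)⁻¹ := by
    intro n
    exact sum_le_hasSum (Finset.range n) (fun i _ => by positivity)
      (hasSum_geometric_of_lt_one hr0.le hr1)
  have hgeom2 : ∀ n : ℕ, ∑ i ∈ Finset.range n, r ^ (n - i) ≤ (1 - r)⁻¹ := by
    intro n
    have h1 : ∑ i ∈ Finset.range n, r ^ (n - i)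
        = ∑ i ∈ Finset.range n, r ^ (i + 1) := by
      rw [← Finset.sum_range_reflect (fun i => r ^ (i + 1)) n]
      apply Finset.sum_congr rfl
      intro i hi
      rw [Finset.mem_range] at hi
      congr 1
      omega
    rw [h1]
    calc ∑ i ∈ Finset.range n, r ^ (i + 1) ≤ ∑ i ∈ Finset.range n, r ^ i := by
          apply Finset.sum_le_sum
          intro i _
          exact pow_le_pow_of_le_one hr0.le hr1.le (Nat.le_succ i)
      _ ≤ (1 - r)⁻¹ := hgeom n
  -- uniform bound on the orbit
  set R : ℝ := C * ‖cv (x 0)‖ + C * Cd * (1 - r)⁻¹ with hR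
  have hbound : ∀ n, ‖cv (x n)‖ ≤ R := by
    intro n
    rw [hcf n]
    have h1 : ‖(A ^ n).mulVec (cv (x 0))‖ ≤ C * r ^ n * ‖cv (x 0)‖ := by
      calc ‖(A ^ n).mulVec (cv (x 0))‖ ≤ ‖A ^ n‖ * ‖cv (x 0)‖ :=
            Matrix.linfty_opNorm_mulVec _ _
        _ ≤ C * r ^ n * ‖cv (x 0)‖ :=
            mul_le_mul_of_nonneg_right (hpow n) (norm_nonneg _)
    have h2 : ‖∑ i ∈ Finset.range n, (A ^ (n - i)).mulVec (cv (dig i))‖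
        ≤ C * Cd * (1 - r)⁻¹ := by
      calc ‖∑ i ∈ Finset.range n, (A ^ (n - i)).mulVec (cv (dig i))‖
          ≤ ∑ i ∈ Finset.range n, ‖(A ^ (n - i)).mulVec (cv (dig i))‖ :=
            norm_sum_le _ _
        _ ≤ ∑ i ∈ Finset.range n, C * r ^ (n - i) * Cd := by
            apply Finset.sum_le_sum
            intro i _
            calc ‖(A ^ (n - i)).mulVec (cv (dig i))‖ ≤ ‖A ^ (n - i)‖ * ‖cv (dig i)‖ :=
                  Matrix.linfty_opNorm_mulVec _ _
              _ ≤ (C * r ^ (n - i)) * Cd := by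
                  apply mul_le_mul (hpow _) (hdigCd i) (norm_nonneg _)
                  positivity
        _ = C * Cd * ∑ i ∈ Finset.range n, r ^ (n - i) := by
            rw [Finset.mul_sum]
            apply Finset.sum_congr rfl
            intro i _
            ring
        _ ≤ C * Cd * (1 - r)⁻¹ := by
            apply mul_le_mul_of_nonneg_left (hgeom2 n)
            positivity
    calc ‖(A ^ n).mulVec (cv (x 0)) - ∑ i ∈ Finset.range n, (A ^ (n - i)).mulVec (cv (dig i))‖
        ≤ ‖(A ^ n).mulVec (cv (x 0))‖
          + ‖∑ i ∈ Finset.range n, (A ^ (n - i)).mulVec (cv (dig i))‖ := norm_sub_le _ _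
      _ ≤ C * r ^ n * ‖cv (x 0)‖ + C * Cd * (1 - r)⁻¹ := add_le_add h1 h2
      _ ≤ R := by
          rw [hR]
          have hrn : r ^ n ≤ 1 := pow_le_one₀ hr0.le hr1.le
          have hCC : C * r ^ n ≤ C := mul_le_of_le_one_right hC0.le hrn
          have : C * r ^ n * ‖cv (x 0)‖ ≤ C * ‖cv (x 0)‖ :=
            mul_le_mul_of_nonneg_right hCC (norm_nonneg _)
          linarith
  -- component bound, finiteness
  set m : ℤ := ⌈R⌉ with hm
  have hcomp : ∀ k i, |x k i| ≤ m := by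
    intro k i
    have h1 : (|x k i| : ℝ) ≤ ‖cv (x k)‖ := by
      have h2 : ‖cv (x k) i‖ ≤ ‖cv (x k)‖ := norm_le_pi_norm (cv (x k)) i
      rw [hcv] at h2 ⊢
      simpa using h2
    have h3 : (|x k i| : ℝ) ≤ (m : ℝ) := le_trans h1 (le_trans (hbound k) (Int.le_ceil R))
    exact_mod_cast h3
  set F : Finset (Fin d → ℤ) := Fintype.piFinset (fun _ : Fin d => Finset.Icc (-m) m) with hF
  have hxF : ∀ k, x k ∈ F := by
    intro k
    rw [hF]
    apply Fintype.mem_piFinset.mpr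
    intro i
    rw [Finset.mem_Icc]
    exact abs_le.mp (hcomp k i)
  -- pigeonhole
  have hpigeon : ∃ a b : ℕ, a < b ∧ x a = x b := by
    obtain ⟨a, b, hab, heq⟩ :=
      Finite.exists_ne_map_eq_of_infinite (fun k : ℕ => (⟨x k, hxF k⟩ : {v // v ∈ F}))
    have heq' : x a = x b := congrArg Subtype.val heq
    rcases hab.lt_or_gt with h | h
    · exact ⟨a, b, h, heq'⟩
    · exact ⟨b, a, h, heq'.symm⟩
  obtain ⟨a, b, hab, hxab⟩ := hpigeon
  -- determinism
  have hmulVec_inj : ∀ u v : Fin d → ℤ, B.mulVec u = B.mulVec v → u = v := by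
    intro u v huv
    have h1 : B.det • u = B.det • v := by
      have := congrArg (fun w => (B.adjugate).mulVec w) huv
      simpa [Matrix.mulVec_mulVec, Matrix.adjugate_mul, Matrix.smul_mulVec,
        Matrix.one_mulVec] using this
    funext i
    have h2 : B.det * u i = B.det * v i := congrFun h1 i
    exact mul_left_cancel₀ hdet0 h2
  have hstep : ∀ k l, x k = x l → x (k + 1) = x (l + 1) := by
    intro k l hkl
    have hdigeq : dig k = dig l := by
      apply (hD (x k)).unique (hdig_spec k)
      have := hdig_spec l
      rw [← hkl] at this
      exact ⟨this.1, this.2⟩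
    apply hmulVec_inj
    have e1 : B.mulVec (x (k + 1)) = x k - dig k := by rw [hdig]; ring
    have e2 : B.mulVec (x (l + 1)) = x l - dig l := by rw [hdig]; ring
    rw [e1, e2, hkl, hdigeq]
  -- periodicity
  set q : ℕ := b - a with hq
  have hq1 : 1 ≤ q := by omega
  have hind : ∀ j, x (a + j + q) = x (a + j) := by
    intro j
    induction j with
    | zero =>
      have : a + 0 + q = b := by omega
      rw [this]
      simpa using hxab.symm
    | succ j ih =>
      have e1 : a + (j + 1) + q = (a + j + q) + 1 := by omega
      have e2 : a + (j + 1) = (a + j) + 1 := by omega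
      rw [e1, e2]
      exact hstep _ _ ih
  have hper : ∀ k, a ≤ k → x (k + q) = x k := by
    intro k hk
    have : k = a + (k - a) := by omega
    rw [this]
    exact hind (k - a)
  refine ⟨a, q, hq1, hper, ?_⟩
  intro k hk
  have h1 : x (k + q) = x k := hper k hk
  have h2 : x (k + q + 1) = x (k + 1) := by
    have : k + q + 1 = (k + 1) + q := by omega
    rw [this]
    exact hper (k + 1) (by omega)
  rw [h1, h2]
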